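/- Selection semantics of ∀: for a simple term τ, a formula Δ, and a world w, we have w ⊨ ∀τ·Δ if and only if w ⊨ Δ and every world w' obtained from w by changing the states of some variables that are set differently in τ (to arbitrary new states) also satisfies Δ. -/

import Mathlib

open scoped Classical

/-- Formulas over finite-domain variables: each variable `X : V` has domain `D X`.
A literal of `X` is (intended to be) a nonempty proper subset of `D X`'s states. -/
inductive Form (V : Type) (D : V → Type) : Type where
  | top : Form V D
  | bot : Form V D
  | lit : (X : V) → Set (D X) → Form V D
  | neg : Form V D → Form V D
  | and : Form V D → Form V D → Form V D
  | or : Form V D → Form V D → Form V D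

namespace Form

variable {V : Type} {D : V → Type}

/-- Satisfaction of a formula by a world. -/
def sat (w : ∀ X, D X) : Form V D → Prop
  | top => True
  | bot => False
  | lit X s => w X ∈ s
  | neg φ => ¬ sat w φ
  | and φ ψ => sat w φ ∧ sat w ψ
  | or φ ψ => sat w φ ∨ sat w ψ

/-- Conditioning `Δ|x` of a formula on state `x` of variable `X`: each `X`-literal
`ℓ` is replaced by `⊤` if `x ∈ ℓ` and by `⊥` otherwise. -/
noncomputable def cond (X : V) (x : D X) : Form V D → Form V D
  | top => top
  | bot => bot
  | lit Y s => if h : X = Y then (if h ▸ x ∈ s then top else bot) else lit Y s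
  | neg φ => neg (cond X x φ)
  | and φ ψ => and (cond X x φ) (cond X x ψ)
  | or φ ψ => or (cond X x φ) (cond X x ψ)

/-- The selection operator `⊓x·Δ := (Δ|x) ∧ Δ`. -/
noncomputable def sel (X : V) (x : D X) (Δ : Form V D) : Form V D :=
  and (cond X x Δ) Δ

/-- Logical equivalence of formulas (same models). -/
def equiv (φ ψ : Form V D) : Prop := ∀ w, sat w φ ↔ sat w ψ

/-- Variable `X` occurs (appears) in the formula. -/
def occurs (X : V) : Form V D → Prop
  | top => False
  | bot => False
  | lit Y _ => Y = X
  | neg φ => occurs X φ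
  | and φ ψ => occurs X φ ∨ occurs X ψ
  | or φ ψ => occurs X φ ∨ occurs X ψ

/-- NNF: negation-free, and every literal is a nonempty proper subset of states. -/
def isNNF : Form V D → Prop
  | top => True
  | bot => True
  | lit _ s => s.Nonempty ∧ s ≠ Set.univ
  | neg _ => False
  | and φ ψ => isNNF φ ∧ isNNF ψ
  | or φ ψ => isNNF φ ∧ isNNF ψ

/-- The `X`-literal `s` occurs in the formula. -/
def litOccurs (X : V) (s : Set (D X)) : Form V D → Prop
  | top => False
  | bot => False
  | lit Y t => ∃ h : Y = X, h ▸ t = s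
  | neg φ => litOccurs X s φ
  | and φ ψ => litOccurs X s φ ∨ litOccurs X s ψ
  | or φ ψ => litOccurs X s φ ∨ litOccurs X s ψ

/-- Every literal in the formula is implied by the instance `I`
(i.e., contains `I`'s state of its variable). -/
def litsImp (I : ∀ X, D X) : Form V D → Prop
  | top => True
  | bot => True
  | lit X s => I X ∈ s
  | neg φ => litsImp I φ
  | and φ ψ => litsImp I φ ∧ litsImp I ψ
  | or φ ψ => litsImp I φ ∧ litsImp I ψ

/-- Iterated selection `⊓` over a list of variables, using states from `v`. -/
noncomputable def selList (v : ∀ X, D X) : List V → Form V D → Form V D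
  | [], Δ => Δ
  | X :: L, Δ => sel X (v X) (selList v L Δ)

/-- The general reason `⊓I·Δ`: selection applied for all states of instance `I`. -/
noncomputable def selAll [Fintype V] (I : ∀ X, D X) (Δ : Form V D) : Form V D :=
  selList I (Finset.univ : Finset V).toList Δ

noncomputable def listAnd : List (Form V D) → Form V D
  | [] => top
  | φ :: L => and φ (listAnd L)

/-- Universal literal quantification `∀x·Δ := (Δ|x) ∧ ⋀_{y ≠ x} (x ∨ Δ|y)`. -/
noncomputable def uq (X : V) [Fintype (D X)] (x : D X) (Δ : Form V D) : Form V D :=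
  letI : DecidableEq (D X) := fun _ _ => Classical.propDecidable _
  and (cond X x Δ)
    (listAnd ((((Finset.univ : Finset (D X)).erase x).toList).map
      (fun y => or (lit X ({x} : Set (D X))) (cond X y Δ))))

/-- Iterated universal literal quantification over a list of variables. -/
noncomputable def uqList [∀ X, Fintype (D X)] (v : ∀ X, D X) : List V → Form V D → Form V D
  | [], Δ => Δ
  | X :: L, Δ => uq X (v X) (uqList v L Δ)

/-- The complete reason `∀I·Δ`. -/
noncomputable def uqAll [Fintype V] [∀ X, Fintype (D X)] (I : ∀ X, D X) (Δ : Form V D) :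
    Form V D :=
  uqList I (Finset.univ : Finset V).toList Δ

end Form

/-- A term: a conjunction of literals over distinct variables. Variable `X` is
mentioned iff `lits X ≠ univ`; each literal is nonempty (terms are consistent). -/
structure MvTerm (V : Type) (D : V → Type) : Type where
  lits : ∀ X, Set (D X)
  nonempty : ∀ X, (lits X).Nonempty

/-- A clause: a disjunction of literals over distinct variables. Variable `X` is
mentioned iff `lits X ≠ ∅`; each literal is proper (clauses are never valid). -/
structure MvClause (V : Type) (D : V → Type) : Type where
  lits : ∀ X, Set (D X)
  proper : ∀ X, lits X ≠ Set.univ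

namespace MvTerm

variable {V : Type} {D : V → Type}

def tsat (w : ∀ X, D X) (τ : MvTerm V D) : Prop := ∀ X, w X ∈ τ.lits X

def vars (τ : MvTerm V D) : Set V := {X | τ.lits X ≠ Set.univ}

/-- A simple term assigns a single state to each of its variables. -/
def simple (τ : MvTerm V D) : Prop :=
  ∀ X, τ.lits X ≠ Set.univ → ∃ x, τ.lits X = ({x} : Set (D X))

end MvTerm

namespace MvClause

variable {V : Type} {D : V → Type}

def csat (w : ∀ X, D X) (σ : MvClause V D) : Prop := ∃ X, w X ∈ σ.lits X

def vars (σ : MvClause V D) : Set V := {X | σ.lits X ≠ (∅ : Set (D X))}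

/-- A simple clause: all its literals are single states. -/
def simple (σ : MvClause V D) : Prop :=
  ∀ X, σ.lits X ≠ (∅ : Set (D X)) → ∃ x, σ.lits X = ({x} : Set (D X))

end MvClause

section PrimeDefs

variable {V : Type} {D : V → Type}

def termImp (τ τ' : MvTerm V D) : Prop := ∀ w, τ.tsat w → τ'.tsat w

def clauseImp (σ σ' : MvClause V D) : Prop := ∀ w, σ.csat w → σ'.csat w

/-- A prime implicant of the set of worlds `M`: a ⊨-maximal term implying `M`. -/
def isPrimeImplicantOf (M : (∀ X, D X) → Prop) (τ : MvTerm V D) : Prop :=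
  (∀ w, τ.tsat w → M w) ∧
  ∀ τ' : MvTerm V D, (∀ w, τ'.tsat w → M w) → termImp τ τ' → τ' = τ

/-- A prime implicate of the set of worlds `M`: a ⊨-minimal clause implied by `M`. -/
def isPrimeImplicateOf (M : (∀ X, D X) → Prop) (σ : MvClause V D) : Prop :=
  (∀ w, M w → σ.csat w) ∧
  ∀ σ' : MvClause V D, (∀ w, M w → σ'.csat w) → clauseImp σ' σ → σ' = σ

/-- Remove subsumed terms: delete any term strictly implied by another in the set. -/
def removeSubsumedT (S : Set (MvTerm V D)) : Set (MvTerm V D) :=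
  {τ ∈ S | ¬ ∃ τ' ∈ S, τ' ≠ τ ∧ termImp τ τ'}

/-- Remove subsumed clauses: delete any clause strictly implying another in the set. -/
def removeSubsumedC (S : Set (MvClause V D)) : Set (MvClause V D) :=
  {σ ∈ S | ¬ ∃ σ' ∈ S, σ' ≠ σ ∧ clauseImp σ' σ}

end PrimeDefs

section Aux

variable {V : Type} {D : V → Type}

lemma cond_sat (X : V) (x : D X) (Δ : Form V D) (w : ∀ X, D X) :
    Form.sat w (Form.cond X x Δ) ↔ Form.sat (Function.update w X x) Δ := by
  induction Δ with
  | top => simp [Form.cond, Form.sat]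
  | bot => simp [Form.cond, Form.sat]
  | lit Y t =>
    by_cases h : X = Y
    · subst h
      simp only [Form.cond, dif_pos rfl]
      by_cases hx : x ∈ t <;> simp [hx, Form.sat, Function.update_self]
    · simp [Form.cond, dif_neg h, Form.sat, Function.update_of_ne (Ne.symm h)]
  | neg φ ih => simp [Form.cond, Form.sat, ih]
  | and φ ψ ih1 ih2 => simp [Form.cond, Form.sat, ih1, ih2]
  | or φ ψ ih1 ih2 => simp [Form.cond, Form.sat, ih1, ih2]

lemma listAnd_sat (L : List (Form V D)) (w : ∀ X, D X) :
    Form.sat w (Form.listAnd L) ↔ ∀ φ ∈ L, Form.sat w φ := by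
  induction L with
  | nil => simp [Form.listAnd, Form.sat]
  | cons φ L ih => simp [Form.listAnd, Form.sat, ih]

lemma uq_sat (X : V) [Fintype (D X)] (x : D X) (Δ : Form V D) (w : ∀ X, D X) :
    Form.sat w (Form.uq X x Δ) ↔
      ∀ y, (y = w X ∨ w X ≠ x) → Form.sat (Function.update w X y) Δ := by
  have hmem : ∀ y : D X,
      y ∈ ((Finset.univ : Finset (D X)).erase x).toList ↔ y ≠ x := by
    intro y; simp [Finset.mem_toList]
  constructor
  · rintro ⟨h1, h2⟩ y hy
    rw [cond_sat] at h1
    rcases eq_or_ne y x with rfl | hyx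
    · exact h1
    · rw [listAnd_sat] at h2
      have := h2 _ (List.mem_map.2 ⟨y, (hmem y).2 hyx, rfl⟩)
      rcases this with hwx | hsat
      · simp only [Form.sat, Set.mem_singleton_iff] at hwx
        rcases hy with rfl | hne
        · exact absurd hwx hyx
        · exact absurd hwx hne
      · exact (cond_sat X y Δ w).1 hsat
  · intro H
    refine ⟨(cond_sat X x Δ w).2 ?_, ?_⟩
    · rcases eq_or_ne (w X) x with h | h
      · exact H x (Or.inl h.symm)
      · exact H x (Or.inr h)
    · rw [listAnd_sat]
      intro φ hφ
      rcases List.mem_map.1 hφ with ⟨y, hy, rfl⟩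
      rcases eq_or_ne (w X) x with h | h
      · exact Or.inl (by simpa [Form.sat] using h)
      · exact Or.inr ((cond_sat X y Δ w).2 (H y (Or.inr h)))

lemma uqList_sat [∀ X, Fintype (D X)] (v : ∀ X, D X) (L : List V) (hL : L.Nodup)
    (Δ : Form V D) (w : ∀ X, D X) :
    Form.sat w (Form.uqList v L Δ) ↔
      ∀ w' : ∀ X, D X, (∀ X, w' X ≠ w X → X ∈ L ∧ w X ≠ v X) → Form.sat w' Δ := by
  induction L generalizing w with
  | nil =>
    simp only [Form.uqList]
    constructor
    · intro h w' hw'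
      have : w' = w := funext fun X => by
        by_contra hne; exact absurd (hw' X hne).1 List.not_mem_nil
      exact this ▸ h
    · intro h; exact h w (fun X hX => absurd rfl hX)
  | cons X L ih =>
    obtain ⟨hXL, hLnd⟩ := List.nodup_cons.1 hL
    simp only [Form.uqList]
    rw [uq_sat]
    constructor
    · intro H w' hw'
      set y := w' X with hy
      have hsel : y = w X ∨ w X ≠ v X := by
        rcases eq_or_ne y (w X) with h | h
        · exact Or.inl h
        · exact Or.inr (hw' X h).2
      have hsat := H y hsel
      rw [ih hLnd] at hsat
      refine hsat w' ?_
      intro Y hY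
      rcases eq_or_ne Y X with rfl | hne
      · exact absurd (Function.update_self Y y w).symm hY
      · rw [Function.update_of_ne hne] at hY ⊢
        rcases hw' Y hY with ⟨hmem, hval⟩
        rcases List.mem_cons.1 hmem with rfl | hmem'
        · exact absurd rfl hne
        · exact ⟨hmem', hval⟩
    · intro H y hy
      rw [ih hLnd]
      intro w' hw'
      refine H w' ?_
      intro Y hY
      rcases eq_or_ne Y X with rfl | hne
      · refine ⟨List.mem_cons_self, ?_⟩
        rcases eq_or_ne (w' Y) (Function.update w Y y Y) with h | h
        · rw [Function.update_self] at h
          rcases hy with rfl | hvx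
          · exact absurd h hY
          · exact hvx
        · exact absurd (hw' Y h).1 hXL
      · have hY' : w' Y ≠ Function.update w X y Y := by
          rw [Function.update_of_ne hne]; exact hY
        obtain ⟨h1, h2⟩ := hw' Y hY'
        rw [Function.update_of_ne hne] at h2
        exact ⟨List.mem_cons_of_mem _ h1, h2⟩

end Aux

/-- selection semantics of `∀`. For a simple term `τ` (domain `s`,
values `v`), `w ⊨ ∀τ·Δ` iff `w ⊨ Δ` and every world `w'` obtained from `w` by
changing (to arbitrary new states) some variables of `τ` that are set differently
in `τ` satisfies `Δ`. -/
theorem forall_semantics {V : Type} {D : V → Type} [∀ X, Fintype (D X)]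
    (Δ : Form V D) (s : Finset V) (v : ∀ X, D X) (w : ∀ X, D X) :
    Form.sat w (Form.uqList v s.toList Δ) ↔
      Form.sat w Δ ∧
      ∀ w' : ∀ X, D X, (∀ X, w' X ≠ w X → X ∈ s ∧ w X ≠ v X) → Form.sat w' Δ := by
  rw [uqList_sat v s.toList s.nodup_toList]
  constructor
  · intro H
    refine ⟨H w (fun X hX => absurd rfl hX), fun w' hw' => H w' (fun X hX => ?_)⟩
    obtain ⟨h1, h2⟩ := hw' X hX
    exact ⟨Finset.mem_toList.2 h1, h2⟩
  · rintro ⟨-, H⟩ w' hw'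
    refine H w' (fun X hX => ?_)
    obtain ⟨h1, h2⟩ := hw' X hX
    exact ⟨Finset.mem_toList.1 h1, h2⟩
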